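/- Let ξ be a complex non-real algebraic number of degree d, set K = ℚ(ξ), and let n be an integer with 2 ≤ n ≤ d-2. Suppose there exist effectively computable positive reals δ and X₀ such that for all integers x₀,...,xₙ with X = max{|x₀|,...,|xₙ|} ≥ X₀ one has |Norm_{K/ℚ}(x₀ + x₁ξ + ... + xₙξⁿ)| ≥ X^δ. Then there exist positive constants c and κ depending on ξ such that |ξ - α| > c·H(α)^{-d/2 + κ} for every algebraic number α of degree at most n. -/

import Mathlib

open IntermediateField

/-- The naïve height of an integer polynomial: the maximum of the absolute values
of its coefficients. -/
noncomputable def polyHeight (P : Polynomial ℤ) : ℕ :=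
  P.support.sup fun i => (P.coeff i).natAbs

/-- `P` is a minimal defining integer polynomial of the algebraic number `α`. -/
def IsMinIntPoly (α : ℂ) (P : Polynomial ℤ) : Prop :=
  Irreducible P ∧ Polynomial.aeval α P = 0

lemma coeff_natAbs_le (P : Polynomial ℤ) (i : ℕ) : (P.coeff i).natAbs ≤ polyHeight P := by
  by_cases h : P.coeff i = 0
  · simp [h]
  · exact Finset.le_sup (f := fun i => (P.coeff i).natAbs) (Polynomial.mem_support_iff.2 h)

lemma one_le_polyHeight (P : Polynomial ℤ) (hP : P ≠ 0) : 1 ≤ polyHeight P := by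
  have h := coeff_natAbs_le P P.natDegree
  have h2 : P.coeff P.natDegree ≠ 0 := Polynomial.leadingCoeff_ne_zero.2 hP
  exact le_trans (Int.natAbs_pos.2 h2) h

lemma sup_fin_eq_polyHeight (P : Polynomial ℤ) (n : ℕ) (h : P.natDegree ≤ n) :
    (Finset.univ.sup fun i : Fin (n+1) => (P.coeff i).natAbs) = polyHeight P := by
  apply le_antisymm
  · exact Finset.sup_le fun i _ => coeff_natAbs_le P i
  · apply Finset.sup_le
    intro j hj
    have hjn : j < n + 1 := Nat.lt_succ_of_le (le_trans (Polynomial.le_natDegree_of_mem_supp j hj) h)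
    exact Finset.le_sup (f := fun i : Fin (n+1) => (P.coeff i).natAbs)
      (Finset.mem_univ (⟨j, hjn⟩ : Fin (n+1)))

lemma badSet_finite (n N : ℕ) :
    Set.Finite {z : ℂ | ∃ P : Polynomial ℤ, P ≠ 0 ∧ P.natDegree ≤ n ∧ polyHeight P ≤ N ∧
      Polynomial.aeval z P = 0} := by
  set T : Set (Polynomial ℤ) := {P | P ≠ 0 ∧ P.natDegree ≤ n ∧ polyHeight P ≤ N} with hT
  have hTfin : T.Finite := by
    have himg : ((fun P : Polynomial ℤ => fun i : Fin (n+1) => P.coeff i) '' T).Finite := by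
      apply Set.Finite.subset (Set.Finite.pi (fun i : Fin (n+1) => Set.finite_Icc (-(N:ℤ)) N))
      rintro f ⟨P, hP, rfl⟩
      intro i _
      simp only [Set.mem_Icc]
      have h1 : (P.coeff i).natAbs ≤ N := le_trans (coeff_natAbs_le P i) hP.2.2
      omega
    apply Set.Finite.of_finite_image himg
    intro P hP Q hQ hfeq
    ext k
    by_cases hk : k < n + 1
    · exact congrFun hfeq ⟨k, hk⟩
    · have hPk := hP.2.1
      have hQk := hQ.2.1
      rw [Polynomial.coeff_eq_zero_of_natDegree_lt (by omega : Q.natDegree < k),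
        Polynomial.coeff_eq_zero_of_natDegree_lt (by omega : P.natDegree < k)]
  apply Set.Finite.subset (hTfin.biUnion (fun P (hP : P ∈ T) =>
    Polynomial.finite_setOf_isRoot (p := P.map (algebraMap ℤ ℂ))
      ((Polynomial.map_ne_zero_iff (algebraMap ℤ ℂ).injective_int).2 hP.1)))
  rintro z ⟨P, h1, h2, h3, h4⟩
  refine Set.mem_biUnion (show P ∈ T from ⟨h1, h2, h3⟩) ?_
  simp only [Set.mem_setOf_eq, Polynomial.IsRoot, Polynomial.eval_map]
  rw [← Polynomial.aeval_def]
  exact h4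

lemma algHom_sum_eq (ξ : ℂ) (n : ℕ) (σ : ℚ⟮ξ⟯ →ₐ[ℚ] ℂ) (P : Polynomial ℤ)
    (hP : P.natDegree ≤ n) :
    σ (∑ i : Fin (n+1), ((P.coeff i : ℤ) : ℚ⟮ξ⟯) * (AdjoinSimple.gen ℚ ξ) ^ (i : ℕ)) =
      Polynomial.aeval (σ (AdjoinSimple.gen ℚ ξ)) P := by
  rw [map_sum, Polynomial.aeval_eq_sum_range' (Nat.lt_succ_of_le hP), Finset.sum_range]
  apply Finset.sum_congr rfl
  intro i _
  simp [zsmul_eq_mul]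

lemma abs_aeval_le (n : ℕ) (z : ℂ) (B : ℝ) (hB : 1 ≤ B) (hz : ‖z‖ ≤ B)
    (P : Polynomial ℤ) (hP : P.natDegree ≤ n) :
    ‖Polynomial.aeval z P‖ ≤ (n+1) * (polyHeight P) * B ^ n := by
  rw [Polynomial.aeval_eq_sum_range' (Nat.lt_succ_of_le hP)]
  refine le_trans (norm_sum_le _ _) ?_
  have : ∀ i ∈ Finset.range (n+1), ‖P.coeff i • z ^ i‖ ≤ (polyHeight P) * B ^ n := by
    intro i hi
    rw [zsmul_eq_mul, norm_mul, norm_pow]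
    have h1 : ‖(P.coeff i : ℂ)‖ ≤ (polyHeight P : ℝ) := by
      rw [Complex.norm_intCast]
      calc |(P.coeff i : ℝ)| = ((P.coeff i).natAbs : ℝ) := by
            rw [Nat.cast_natAbs]; push_cast; ring
        _ ≤ (polyHeight P : ℝ) := by exact_mod_cast coeff_natAbs_le P i
    have h2 : ‖z‖ ^ i ≤ B ^ n := by
      calc ‖z‖ ^ i ≤ B ^ i := pow_le_pow_left₀ (norm_nonneg z) hz i
        _ ≤ B ^ n := by
            apply pow_le_pow_right₀ hB
            have := Finset.mem_range.1 hi
            omega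
    exact mul_le_mul h1 h2 (by positivity) (by positivity)
  refine le_trans (Finset.sum_le_sum this) ?_
  rw [Finset.sum_const, Finset.card_range]
  simp only [nsmul_eq_mul]
  push_cast
  ring_nf
  exact le_refl _

lemma abs_pow_sub_pow_le' (x y : ℂ) (i n : ℕ) (hi : i ≤ n) (M : ℝ) (hM : 1 ≤ M)
    (hx : ‖x‖ ≤ M) (hy : ‖y‖ ≤ M) :
    ‖x ^ i - y ^ i‖ ≤ (n+1) * M ^ n * ‖x - y‖ := by
  rw [← geom_sum₂_mul, norm_mul]
  gcongr
  refine le_trans (norm_sum_le _ _) ?_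
  have : ∀ j ∈ Finset.range i, ‖x ^ j * y ^ (i - 1 - j)‖ ≤ M ^ n := by
    intro j hj
    rw [norm_mul, norm_pow, norm_pow]
    calc ‖x‖ ^ j * ‖y‖ ^ (i-1-j) ≤ M ^ j * M ^ (i-1-j) := by
          gcongr <;> first | positivity | assumption
      _ = M ^ (j + (i-1-j)) := by rw [pow_add]
      _ ≤ M ^ n := by apply pow_le_pow_right₀ hM; simp at hj; omega
  refine le_trans (Finset.sum_le_sum this) ?_
  rw [Finset.sum_const, Finset.card_range]
  simp only [nsmul_eq_mul]
  have : (i : ℝ) ≤ (n : ℝ) + 1 := by exact_mod_cast Nat.le_succ_of_le hi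
  nlinarith [pow_pos (lt_of_lt_of_le one_pos hM) n]

lemma aeval_sub_bound (n : ℕ) (ξ α : ℂ) (hle : ‖ξ - α‖ ≤ 1) (P : Polynomial ℤ)
    (hP : P.natDegree ≤ n) (hroot : Polynomial.aeval α P = 0) :
    ‖Polynomial.aeval ξ P‖ ≤
      ((n:ℝ)+1)^2 * (‖ξ‖ + 1)^n * polyHeight P * ‖ξ - α‖ := by
  set M := ‖ξ‖ + 1 with hM
  have h0 := norm_nonneg ξ
  have hM1 : 1 ≤ M := by rw [hM]; linarith
  have hxM : ‖ξ‖ ≤ M := by rw [hM]; linarith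
  have hαM : ‖α‖ ≤ M := by
    have h1 : ‖α‖ ≤ ‖α - ξ‖ + ‖ξ‖ := by
      simpa using norm_add_le (α - ξ) ξ
    rw [norm_sub_rev] at h1
    rw [hM]
    linarith
  have hsum : Polynomial.aeval ξ P =
      ∑ i ∈ Finset.range (n+1), P.coeff i • (ξ ^ i - α ^ i) := by
    have h1 : Polynomial.aeval ξ P = Polynomial.aeval ξ P - Polynomial.aeval α P := by
      rw [hroot, sub_zero]
    rw [h1, Polynomial.aeval_eq_sum_range' (Nat.lt_succ_of_le hP),
      Polynomial.aeval_eq_sum_range' (Nat.lt_succ_of_le hP), ← Finset.sum_sub_distrib]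
    apply Finset.sum_congr rfl
    intro i _
    rw [smul_sub]
  rw [hsum]
  refine le_trans (norm_sum_le _ _) ?_
  have hterm : ∀ i ∈ Finset.range (n+1), ‖P.coeff i • (ξ ^ i - α ^ i)‖ ≤
      (polyHeight P : ℝ) * (((n:ℝ)+1) * M ^ n * ‖ξ - α‖) := by
    intro i hi
    rw [zsmul_eq_mul, norm_mul]
    have h1 : ‖(P.coeff i : ℂ)‖ ≤ (polyHeight P : ℝ) := by
      rw [Complex.norm_intCast]
      calc |(P.coeff i : ℝ)| = ((P.coeff i).natAbs : ℝ) := by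
            rw [Nat.cast_natAbs]; push_cast; ring
        _ ≤ (polyHeight P : ℝ) := by exact_mod_cast coeff_natAbs_le P i
    have h2 : ‖ξ ^ i - α ^ i‖ ≤ ((n:ℝ)+1) * M ^ n * ‖ξ - α‖ := by
      have := abs_pow_sub_pow_le' ξ α i n (by have := Finset.mem_range.1 hi; omega) M hM1 hxM hαM
      exact_mod_cast this
    exact mul_le_mul h1 h2 (norm_nonneg _) (by positivity)
  refine le_trans (Finset.sum_le_sum hterm) ?_
  rw [Finset.sum_const, Finset.card_range]
  simp only [nsmul_eq_mul]
  push_cast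
  ring_nf
  exact le_refl _
set_option maxHeartbeats 1000000 in
theorem stmt5 (ξ : ℂ) (hnr : ξ.im ≠ 0) (d n : ℕ) (hn2 : 2 ≤ n) (hnd : n + 2 ≤ d)
    (hdeg : (minpoly ℚ ξ).natDegree = d)
    (hnorm : ∃ δ > (0 : ℝ), ∃ X₀ > (0 : ℝ), ∀ x : Fin (n + 1) → ℤ,
      X₀ ≤ ((Finset.univ.sup fun i => (x i).natAbs : ℕ) : ℝ) →
      ((Finset.univ.sup fun i => (x i).natAbs : ℕ) : ℝ) ^ δ ≤
        ((|Algebra.norm ℚ (∑ i : Fin (n + 1),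
          (x i : ℚ⟮ξ⟯) * (IntermediateField.AdjoinSimple.gen ℚ ξ) ^ (i : ℕ))| : ℚ) : ℝ)) :
    ∃ c > (0 : ℝ), ∃ κ > (0 : ℝ), ∀ (α : ℂ) (P : Polynomial ℤ), IsMinIntPoly α P →
      P.natDegree ≤ n →
      c * (polyHeight P : ℝ) ^ (-(d : ℝ) / 2 + κ) < ‖ξ - α‖ := by
  classical
  obtain ⟨δ₀, hδ₀, X₀, hX₀pos, hbound₀⟩ := hnorm
  have hd4 : 4 ≤ d := by omega
  -- normalize δ, X₀
  set δ : ℝ := min δ₀ 1 with hδdef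
  have hδpos : 0 < δ := lt_min hδ₀ one_pos
  have hδ1 : δ ≤ 1 := min_le_right _ _
  set Y₀ : ℝ := max X₀ 1 with hY₀def
  have hY₀1 : (1:ℝ) ≤ Y₀ := le_max_right _ _
  have hbound : ∀ x : Fin (n + 1) → ℤ,
      Y₀ ≤ ((Finset.univ.sup fun i => (x i).natAbs : ℕ) : ℝ) →
      ((Finset.univ.sup fun i => (x i).natAbs : ℕ) : ℝ) ^ δ ≤
        ((|Algebra.norm ℚ (∑ i : Fin (n + 1),
          (x i : ℚ⟮ξ⟯) * (IntermediateField.AdjoinSimple.gen ℚ ξ) ^ (i : ℕ))| : ℚ) : ℝ) := by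
    intro x hx
    have hX1 : (1:ℝ) ≤ ((Finset.univ.sup fun i => (x i).natAbs : ℕ) : ℝ) :=
      le_trans hY₀1 hx
    calc ((Finset.univ.sup fun i => (x i).natAbs : ℕ) : ℝ) ^ δ
        ≤ ((Finset.univ.sup fun i => (x i).natAbs : ℕ) : ℝ) ^ δ₀ :=
          Real.rpow_le_rpow_of_exponent_le hX1 (min_le_left _ _)
      _ ≤ _ := hbound₀ x (le_trans (le_max_left _ _) hx)
  -- algebraic setup
  have hξint : IsIntegral ℚ ξ := by
    by_contra h
    rw [minpoly.eq_zero h] at hdeg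
    simp at hdeg
    omega
  haveI : FiniteDimensional ℚ ℚ⟮ξ⟯ := IntermediateField.adjoin.finiteDimensional hξint
  have hrank : Module.finrank ℚ ℚ⟮ξ⟯ = d := by
    rw [IntermediateField.adjoin.finrank hξint, hdeg]
  have hcard : Fintype.card (ℚ⟮ξ⟯ →ₐ[ℚ] ℂ) = d := by
    rw [AlgHom.card ℚ ℚ⟮ξ⟯ ℂ, hrank]
  set g := AdjoinSimple.gen ℚ ξ with hgdef
  set σ₀ : ℚ⟮ξ⟯ →ₐ[ℚ] ℂ := IntermediateField.val ℚ⟮ξ⟯ with hσ₀def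
  have hσ₀g : σ₀ g = ξ := IntermediateField.AdjoinSimple.coe_gen ℚ ξ
  set σ₁ : ℚ⟮ξ⟯ →ₐ[ℚ] ℂ := ((starRingEnd ℂ) : ℂ →+* ℂ).toRatAlgHom.comp σ₀ with hσ₁def
  have hσ₁y : ∀ y : ℚ⟮ξ⟯, σ₁ y = (starRingEnd ℂ) (σ₀ y) := by
    intro y; simp [hσ₁def, RingHom.toRatAlgHom]
  have hσ₁g : σ₁ g = (starRingEnd ℂ) ξ := by rw [hσ₁y, hσ₀g]
  have hσne : σ₀ ≠ σ₁ := by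
    intro h
    rw [h, hσ₁g] at hσ₀g
    exact hnr (Complex.conj_eq_iff_im.1 hσ₀g)
  haveI : Nonempty (ℚ⟮ξ⟯ →ₐ[ℚ] ℂ) := ⟨σ₀⟩
  -- norm to product of embeddings
  have hprod : ∀ y : ℚ⟮ξ⟯, ((|Algebra.norm ℚ y| : ℚ) : ℝ) =
      ∏ σ : ℚ⟮ξ⟯ →ₐ[ℚ] ℂ, ‖σ y‖ := by
    intro y
    have h := Algebra.norm_eq_prod_embeddings ℚ ℂ y
    have h2 := congrArg (fun z : ℂ => ‖z‖) h
    rw [norm_prod] at h2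
    rw [← h2]
    rw [show (algebraMap ℚ ℂ) (Algebra.norm ℚ y) = ((Algebra.norm ℚ y : ℚ) : ℂ) from rfl]
    rw [show ((Algebra.norm ℚ y : ℚ) : ℂ) = (((Algebra.norm ℚ y : ℚ) : ℝ) : ℂ) by norm_cast,
      Complex.norm_real, Real.norm_eq_abs]
    exact Rat.cast_abs _
  -- constants
  set B : ℝ := Finset.univ.sup' Finset.univ_nonempty
      (fun σ : ℚ⟮ξ⟯ →ₐ[ℚ] ℂ => max 1 (‖σ g‖)) with hBdef
  have hB1 : 1 ≤ B := le_trans (le_max_left _ _)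
    (Finset.le_sup' (fun σ : ℚ⟮ξ⟯ →ₐ[ℚ] ℂ => max 1 (‖σ g‖)) (Finset.mem_univ σ₀))
  have hBσ : ∀ σ : ℚ⟮ξ⟯ →ₐ[ℚ] ℂ, ‖σ g‖ ≤ B := fun σ =>
    le_trans (le_max_right _ _)
      (Finset.le_sup' (fun σ : ℚ⟮ξ⟯ →ₐ[ℚ] ℂ => max 1 (‖σ g‖)) (Finset.mem_univ σ))
  set C : ℝ := ((n:ℝ)+1) * B ^ n with hCdef
  have hC1 : 1 ≤ C := by
    have h1 : (1:ℝ) ≤ B ^ n := one_le_pow₀ hB1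
    have h2 : (1:ℝ) ≤ (n:ℝ)+1 := by have := Nat.cast_nonneg (α:=ℝ) n; linarith
    rw [hCdef]
    nlinarith
  set M : ℝ := ‖ξ‖ + 1 with hMdef
  set C₁ : ℝ := ((n:ℝ)+1)^2 * M ^ n with hC₁def
  have hM1 : (1:ℝ) ≤ M := by have := norm_nonneg ξ; rw [hMdef]; linarith
  have hMpos : (0:ℝ) < M := lt_of_lt_of_le one_pos hM1
  have hC₁pos : 0 < C₁ := by
    rw [hC₁def]
    exact mul_pos (by positivity) (pow_pos hMpos n)
  obtain ⟨C₂, hC₂def⟩ : ∃ r : ℝ, r = C₁^2 * C ^ (d-2) := ⟨_, rfl⟩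
  have hCpos : (0:ℝ) < C := lt_of_lt_of_le one_pos hC1
  have hC₂pos : 0 < C₂ := by
    rw [hC₂def]
    exact mul_pos (pow_pos hC₁pos 2) (pow_pos hCpos _)
  -- exceptional set
  set N : ℕ := ⌈Y₀⌉₊ with hNdef
  set S : Set ℂ := {z : ℂ | ∃ P : Polynomial ℤ, P ≠ 0 ∧ P.natDegree ≤ n ∧ polyHeight P ≤ N ∧
      Polynomial.aeval z P = 0} with hSdef
  have hSfin : S.Finite := badSet_finite n N
  have hxiS : ξ ∉ S := by
    rintro ⟨Q, h1, h2, _, h4⟩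
    have h5 : Polynomial.aeval ξ (Q.map (algebraMap ℤ ℚ)) = 0 := by
      rw [Polynomial.aeval_map_algebraMap]; exact h4
    have h6 := minpoly.dvd ℚ ξ h5
    have h7 : (Q.map (algebraMap ℤ ℚ)) ≠ 0 :=
      (Polynomial.map_ne_zero_iff (algebraMap ℤ ℚ).injective_int).2 h1
    have h8 := Polynomial.natDegree_le_of_dvd h6 h7
    rw [Polynomial.natDegree_map_eq_of_injective (algebraMap ℤ ℚ).injective_int] at h8
    omega
  set F : Finset ℂ := hSfin.toFinset with hFdef
  set G : Finset ℝ := insert (1:ℝ) (F.image fun z => ‖ξ - z‖) with hGdef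
  have hGne : G.Nonempty := ⟨1, Finset.mem_insert_self _ _⟩
  set ε : ℝ := G.min' hGne with hεdef
  have hεpos : 0 < ε := by
    rw [hεdef]
    apply (Finset.lt_min'_iff _ _).2
    intro b hb
    rcases Finset.mem_insert.1 hb with rfl | hb
    · norm_num
    · obtain ⟨z, hz, rfl⟩ := Finset.mem_image.1 hb
      have hzS : z ∈ S := hSfin.mem_toFinset.1 hz
      have hzξ : ξ - z ≠ 0 := sub_ne_zero.2 (fun h => hxiS (h ▸ hzS))
      exact norm_pos_iff.mpr hzξ
  have hεle : ∀ z ∈ S, ε ≤ ‖ξ - z‖ := fun z hz =>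
    Finset.min'_le _ _ (Finset.mem_insert_of_mem
      (Finset.mem_image_of_mem _ (hSfin.mem_toFinset.2 hz)))
  -- the constants
  set c : ℝ := min (min (1/2) (ε/2)) (Real.sqrt C₂⁻¹ / 2) with hcdef
  have hcpos : 0 < c := by
    apply lt_min (lt_min (by norm_num) (by linarith))
    have := Real.sqrt_pos.2 (inv_pos.2 hC₂pos)
    linarith
  refine ⟨c, hcpos, δ/2, by linarith, ?_⟩
  intro α P ⟨hirr, hroot⟩ hdegP
  have hP0 : P ≠ 0 := hirr.ne_zero
  set H : ℝ := (polyHeight P : ℝ) with hHdef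
  have hH1 : (1:ℝ) ≤ H := by rw [hHdef]; exact_mod_cast one_le_polyHeight P hP0
  have hHpos : (0:ℝ) < H := by linarith
  set e : ℝ := -(d:ℝ)/2 + δ/2 with hedef
  have hen : e ≤ 0 := by
    rw [hedef]
    have : (4:ℝ) ≤ (d:ℝ) := by exact_mod_cast hd4
    linarith
  have hHe1 : H ^ e ≤ 1 := Real.rpow_le_one_of_one_le_of_nonpos hH1 hen
  have hHepos : 0 < H ^ e := Real.rpow_pos_of_pos hHpos e
  rcases lt_or_ge 1 (‖ξ - α‖) with hcase1 | hle1
  · calc c * H ^ e ≤ c := mul_le_of_le_one_right (le_of_lt hcpos) hHe1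
      _ ≤ 1/2 := le_trans (min_le_left _ _) (min_le_left _ _)
      _ < ‖ξ - α‖ := by linarith
  by_cases hcase2 : Y₀ ≤ H
  swap
  · -- small height: exceptional set
    have hαS : α ∈ S := by
      refine ⟨P, hP0, hdegP, ?_, hroot⟩
      have h1 : H < (N:ℝ) := lt_of_lt_of_le (lt_of_not_ge hcase2) (Nat.le_ceil Y₀)
      rw [hHdef] at h1
      have h2 : polyHeight P < N := by exact_mod_cast h1
      omega
    calc c * H ^ e ≤ c := mul_le_of_le_one_right (le_of_lt hcpos) hHe1
      _ ≤ ε/2 := le_trans (min_le_left _ _) (min_le_right _ _)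
      _ < ε := by linarith
      _ ≤ ‖ξ - α‖ := hεle α hαS
  -- main case
  · have hsup : (Finset.univ.sup fun i : Fin (n+1) => (P.coeff i).natAbs) = polyHeight P :=
      sup_fin_eq_polyHeight P n hdegP
    set y : ℚ⟮ξ⟯ := ∑ i : Fin (n+1), ((P.coeff i : ℤ) : ℚ⟮ξ⟯) * g ^ (i:ℕ) with hydef
    have key : H ^ δ ≤ ((|Algebra.norm ℚ y| : ℚ) : ℝ) := by
      have hb := hbound (fun i => P.coeff i)
      simp only [hsup] at hb
      exact hb hcase2
    have hyσ : ∀ σ : ℚ⟮ξ⟯ →ₐ[ℚ] ℂ, σ y = Polynomial.aeval (σ g) P := fun σ =>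
      algHom_sum_eq ξ n σ P hdegP
    set pair : Finset (ℚ⟮ξ⟯ →ₐ[ℚ] ℂ) := {σ₀, σ₁} with hpairdef
    have hpairsub : pair ⊆ Finset.univ := Finset.subset_univ _
    have hsplit : ∏ σ : ℚ⟮ξ⟯ →ₐ[ℚ] ℂ, ‖σ y‖ =
        (∏ σ ∈ Finset.univ \ pair, ‖σ y‖) *
          (‖σ₀ y‖ * ‖σ₁ y‖) := by
      rw [← Finset.prod_sdiff hpairsub, hpairdef, Finset.prod_pair hσne]
    have hconj : ‖σ₁ y‖ = ‖σ₀ y‖ := by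
      rw [hσ₁y]; exact Complex.norm_conj _
    have hrest : ∏ σ ∈ Finset.univ \ pair, ‖σ y‖ ≤ (C * H) ^ (d - 2) := by
      have hcard2 : (Finset.univ \ pair).card = d - 2 := by
        rw [Finset.card_sdiff_of_subset hpairsub, Finset.card_univ, hcard, hpairdef,
          Finset.card_pair hσne]
      calc ∏ σ ∈ Finset.univ \ pair, ‖σ y‖
          ≤ ∏ _σ ∈ Finset.univ \ pair, (C * H) := by
            apply Finset.prod_le_prod (fun σ _ => norm_nonneg _)
            intro σ _
            rw [hyσ σ]
            refine le_trans (abs_aeval_le n (σ g) B hB1 (hBσ σ) P hdegP) ?_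
            apply le_of_eq
            rw [hCdef, hHdef]
            push_cast
            ring
        _ = (C * H) ^ (d-2) := by rw [Finset.prod_const, hcard2]
    have hCHpos : (0:ℝ) < C * H := by nlinarith
    have hA : ‖σ₀ y‖ ≤ C₁ * H * ‖ξ - α‖ := by
      rw [hyσ, hσ₀g]
      refine le_trans (aeval_sub_bound n ξ α hle1 P hdegP hroot) ?_
      apply le_of_eq
      rw [hC₁def, hHdef, hMdef]
      try push_cast
      try ring
    have habs_nonneg : 0 ≤ ‖ξ - α‖ := norm_nonneg _
    have hkey2 : H ^ δ ≤ (C * H)^(d-2) * ‖σ₀ y‖^2 := by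
      rw [hprod y, hsplit, hconj] at key
      have h5 : ‖σ₀ y‖ * ‖σ₀ y‖ = ‖σ₀ y‖^2 := by ring
      rw [h5] at key
      refine le_trans key ?_
      apply mul_le_mul_of_nonneg_right hrest (by positivity)
    have hkey3 : H ^ δ ≤ C₂ * H^d * ‖ξ - α‖^2 := by
      have h1 : ‖σ₀ y‖^2 ≤ (C₁ * H * ‖ξ-α‖)^2 :=
        pow_le_pow_left₀ (norm_nonneg _) hA 2
      have h2 : H ^ δ ≤ (C*H)^(d-2) * (C₁ * H * ‖ξ-α‖)^2 :=
        le_trans hkey2 (mul_le_mul_of_nonneg_left h1 (by positivity))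
      refine le_trans h2 (le_of_eq ?_)
      have hd' : d - 2 + 2 = d := by omega
      have hHpow : H^(d-2) * H^2 = H^(d:ℕ) := by rw [← pow_add, hd']
      calc (C*H)^(d-2) * (C₁ * H * ‖ξ-α‖)^2
          = (C₁^2 * C^(d-2)) * (H^(d-2) * H^2) * ‖ξ-α‖^2 := by
            rw [mul_pow, mul_pow, mul_pow]
            ring
        _ = C₂ * H^d * ‖ξ-α‖^2 := by rw [hHpow, hC₂def]
    apply lt_of_pow_lt_pow_left₀ 2 habs_nonneg
    have hHd : (0:ℝ) < H^d := by positivity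
    have hrpow : (H ^ e)^2 = H ^ δ * ((H:ℝ)^d)⁻¹ := by
      rw [← Real.rpow_natCast (H ^ e) 2, ← Real.rpow_mul (le_of_lt hHpos)]
      rw [show (e * ((2:ℕ):ℝ)) = δ + (-(d:ℝ)) by rw [hedef]; push_cast; ring]
      rw [Real.rpow_add hHpos, Real.rpow_neg (le_of_lt hHpos), Real.rpow_natCast]
    have hc2 : c^2 < C₂⁻¹ := by
      have h1 : c ≤ Real.sqrt C₂⁻¹ / 2 := min_le_right _ _
      have h2 : c^2 ≤ (Real.sqrt C₂⁻¹/2)^2 := pow_le_pow_left₀ (le_of_lt hcpos) h1 2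
      rw [div_pow, Real.sq_sqrt (le_of_lt (inv_pos.2 hC₂pos))] at h2
      have h3 : 0 < C₂⁻¹ := inv_pos.2 hC₂pos
      linarith
    have hlb : H ^ δ * (H^d)⁻¹ * C₂⁻¹ ≤ ‖ξ-α‖^2 := by
      have h4 : H ^ δ / (C₂ * H^d) ≤ ‖ξ-α‖^2 := by
        rw [div_le_iff₀ (by positivity)]
        calc H ^ δ ≤ C₂ * H^d * ‖ξ-α‖^2 := hkey3
          _ = ‖ξ-α‖^2 * (C₂ * H^d) := by ring
      refine le_trans (le_of_eq ?_) h4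
      rw [div_eq_mul_inv, mul_inv]
      ring
    calc (c * H^e)^2 = c^2 * (H^e)^2 := by ring
      _ = c^2 * (H^δ * (H^d)⁻¹) := by rw [hrpow]
      _ < C₂⁻¹ * (H^δ * (H^d)⁻¹) := by
          apply mul_lt_mul_of_pos_right hc2 (by positivity)
      _ = H^δ * (H^d)⁻¹ * C₂⁻¹ := by ring
      _ ≤ ‖ξ-α‖^2 := hlb
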